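/- Let G be a connected 3-regular graph that admits a cutset S with ω(G−S) > 2|S| (i.e., τ(G) < 1/2). Then there exists a vertex v of G whose removal leaves at least three connected components, i.e., ω(G−{v}) ≥ 3. -/

import Mathlib

open SimpleGraph
open scoped ENNReal

namespace Toughness

variable {V : Type*}

/-- Number of connected components of the graph obtained from `G` by deleting the vertex set `S`. -/
noncomputable def numComp (G : SimpleGraph V) (S : Set V) : ℕ :=
  Nat.card (G.induce Sᶜ).ConnectedComponent

/-- `S` is a cutset of `G`: deleting it leaves more than one connected component. -/
def IsCutset (G : SimpleGraph V) (S : Set V) : Prop :=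
  1 < numComp G S

/-- `G` is `t`-tough: every cutset `S` satisfies `t · ω(G−S) ≤ |S|`. -/
def IsTough (t : ℝ) (G : SimpleGraph V) : Prop :=
  ∀ S : Set V, IsCutset G S → t * (numComp G S : ℝ) ≤ (S.ncard : ℝ)

/-- The toughness of `G`: the infimum of `|S| / ω(G−S)` over all cutsets `S`,
with value `∞` when there is no cutset (e.g. for complete graphs). -/
noncomputable def toughness (G : SimpleGraph V) : ℝ≥0∞ :=
  ⨅ (S : Set V) (_ : IsCutset G S), (S.ncard : ℝ≥0∞) / (numComp G S : ℝ≥0∞)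

/-- Inclusion homomorphism between induced subgraphs. -/
def inclHom (G : SimpleGraph V) {U W : Set V} (h : U ⊆ W) :
    G.induce U →g G.induce W where
  toFun x := ⟨x.1, h x.2⟩
  map_rel' := fun ha => ha

/-- A walk in `G.induce W` avoiding `s` lifts to reachability in `G.induce U`,
where `U = W \ {s}`. -/
lemma lift_reach (G : SimpleGraph V) {U W : Set V} (s : V)
    (hU : ∀ x ∈ W, x ≠ s → x ∈ U) :
    ∀ {x y : ↥W} (p : (G.induce W).Walk x y), (∀ z ∈ p.support, z.1 ≠ s) →
      ∀ (hx : x.1 ∈ U) (hy : y.1 ∈ U),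
        (G.induce U).Reachable ⟨x.1, hx⟩ ⟨y.1, hy⟩ := by
  intro x y p
  induction p with
  | nil => intro _ hx hy; exact Reachable.refl _
  | @cons a b c hab q ih =>
    intro hsup hx hy
    have hb : b.1 ≠ s := hsup b (by simp [Walk.support_cons])
    have hbU : b.1 ∈ U := hU b.1 b.2 hb
    have h1 : (G.induce U).Adj ⟨a.1, hx⟩ ⟨b.1, hbU⟩ := hab
    exact h1.reachable.trans
      (ih (fun z hz => hsup z (by simp [Walk.support_cons]; exact Or.inr hz)) hbU hy)

/-- A walk in `G.induce W` from a vertex of `U` to `s` yields a neighbor `u` of `s`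
lying in `U` and reachable from the start within `G.induce U`. -/
lemma exists_nbr (G : SimpleGraph V) {U W : Set V} (s : V) (hsU : s ∉ U)
    (hU : ∀ x ∈ W, x ≠ s → x ∈ U) :
    ∀ {x y : ↥W} (p : (G.induce W).Walk x y), y.1 = s →
      ∀ (hx : x.1 ∈ U),
        ∃ u, G.Adj s u ∧ ∃ hu : u ∈ U, (G.induce U).Reachable ⟨x.1, hx⟩ ⟨u, hu⟩ := by
  intro x y p
  induction p with
  | nil => intro hy hx; exact absurd (hy ▸ hx) hsU
  | @cons a b c hab q ih =>
    intro hy hx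
    by_cases hb : b.1 = s
    · refine ⟨a.1, ?_, hx, Reachable.refl _⟩
      have h1 : G.Adj a.1 b.1 := hab
      rw [hb] at h1
      exact h1.symm
    · have hbU : b.1 ∈ U := hU b.1 b.2 hb
      obtain ⟨u, h1, hu, h2⟩ := ih hy hbU
      have h3 : (G.induce U).Adj ⟨a.1, hx⟩ ⟨b.1, hbU⟩ := hab
      exact ⟨u, h1, hu, h3.reachable.trans h2⟩

/-- Putting back a vertex of degree `3` decreases the number of components by at most `2`. -/
lemma key_numComp [Fintype V] (G : SimpleGraph V) [DecidableRel G.Adj]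
    (hreg : G.IsRegularOfDegree 3) (S : Set V) (s : V) (hs : s ∈ S) :
    numComp G S ≤ numComp G (S \ {s}) + 2 := by
  classical
  set T := S \ {s} with hTdef
  have hsub : (Sᶜ : Set V) ⊆ Tᶜ := Set.compl_subset_compl.mpr Set.diff_subset
  have hsT : s ∈ (Tᶜ : Set V) := by simp [hTdef]
  have hU : ∀ x ∈ (Tᶜ : Set V), x ≠ s → x ∈ (Sᶜ : Set V) := by
    intro x hx hxs
    simp only [hTdef, Set.mem_compl_iff, Set.mem_diff, Set.mem_singleton_iff, not_and,
      not_not] at hx ⊢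
    intro hxS; exact hxs (hx hxS)
  have hsU : s ∉ (Sᶜ : Set V) := by simp [hs]
  let f : (G.induce Sᶜ).ConnectedComponent → (G.induce Tᶜ).ConnectedComponent :=
    ConnectedComponent.map (inclHom G hsub)
  let K : (G.induce Tᶜ).ConnectedComponent := (G.induce Tᶜ).connectedComponentMk ⟨s, hsT⟩
  set F : Set (G.induce Sᶜ).ConnectedComponent := f ⁻¹' {K} with hFdef
  -- components in the fiber over K contain a neighbor of s
  have hC1 : ∀ a ∈ F, ∃ u, G.Adj s u ∧ ∃ hu : u ∈ (Sᶜ : Set V),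
      a = (G.induce Sᶜ).connectedComponentMk ⟨u, hu⟩ := by
    intro a ha
    obtain ⟨c, rfl⟩ := a.exists_rep
    have hfc : f ((G.induce Sᶜ).connectedComponentMk c)
        = (G.induce Tᶜ).connectedComponentMk ⟨c.1, hsub c.2⟩ := rfl
    have hK : (G.induce Tᶜ).connectedComponentMk ⟨c.1, hsub c.2⟩ = K := by
      rw [← hfc]; exact ha
    have hr : (G.induce Tᶜ).Reachable ⟨c.1, hsub c.2⟩ ⟨s, hsT⟩ :=
      ConnectedComponent.exact hK
    obtain ⟨p⟩ := hr
    obtain ⟨u, hadj, hu, hreach⟩ := exists_nbr G s hsU hU p rfl c.2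
    exact ⟨u, hadj, hu, ConnectedComponent.sound hreach⟩
  -- f is injective away from the fiber over K
  have hC2 : ∀ a₁ ∈ Fᶜ, ∀ a₂ ∈ Fᶜ, f a₁ = f a₂ → a₁ = a₂ := by
    intro a₁ ha₁ a₂ ha₂ hf
    obtain ⟨c₁, rfl⟩ := a₁.exists_rep
    obtain ⟨c₂, rfl⟩ := a₂.exists_rep
    have hr : (G.induce Tᶜ).Reachable ⟨c₁.1, hsub c₁.2⟩ ⟨c₂.1, hsub c₂.2⟩ :=
      ConnectedComponent.exact hf
    obtain ⟨p⟩ := hr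
    by_cases hsup : ∀ z ∈ p.support, z.1 ≠ s
    · have := lift_reach G s hU p hsup c₁.2 c₂.2
      exact ConnectedComponent.sound this
    · push_neg at hsup
      obtain ⟨z, hz, hzs⟩ := hsup
      have hzeq : z = ⟨s, hsT⟩ := Subtype.ext hzs
      subst hzeq
      have hr1 : (G.induce Tᶜ).Reachable ⟨c₁.1, hsub c₁.2⟩ ⟨s, hsT⟩ := ⟨p.takeUntil _ hz⟩
      exfalso
      apply ha₁
      show f ((G.induce Sᶜ).connectedComponentMk c₁) ∈ ({K} : Set _)
      exact ConnectedComponent.sound hr1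
  -- count the fiber over K
  have hF3 : F.ncard ≤ 3 := by
    have hmap : ∀ a ∈ F, (fun a => if h : a ∈ F then (hC1 a h).choose else s) a
        ∈ G.neighborSet s := by
      intro a ha
      simp only [dif_pos ha]
      exact (hC1 a ha).choose_spec.1
    have hinj : Set.InjOn (fun a => if h : a ∈ F then (hC1 a h).choose else s) F := by
      intro a₁ h₁ a₂ h₂ heq
      simp only [dif_pos h₁, dif_pos h₂] at heq
      obtain ⟨hadj₁, hu₁, he₁⟩ := (hC1 a₁ h₁).choose_spec
      obtain ⟨hadj₂, hu₂, he₂⟩ := (hC1 a₂ h₂).choose_spec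
      rw [he₁, he₂]
      congr 1
      exact Subtype.ext heq
    have hle := Set.ncard_le_ncard_of_injOn _ hmap hinj (Set.toFinite _)
    have hdeg : (G.neighborSet s).ncard = 3 := by
      rw [Set.ncard_eq_toFinset_card']
      have : (G.neighborSet s).toFinset = G.neighborFinset s := rfl
      rw [this]
      exact hreg s
    omega
  have hBpos : 1 ≤ Nat.card (G.induce Tᶜ).ConnectedComponent :=
    Nat.one_le_iff_ne_zero.mpr (Nat.card_ne_zero.mpr ⟨⟨K⟩, inferInstance⟩)
  have hFc : Fᶜ.ncard ≤ Nat.card (G.induce Tᶜ).ConnectedComponent - 1 := by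
    have hmap : ∀ a ∈ Fᶜ, f a ∈ ({K}ᶜ : Set _) := fun a ha => ha
    have hle := Set.ncard_le_ncard_of_injOn f hmap (fun a₁ h₁ a₂ h₂ => hC2 a₁ h₁ a₂ h₂)
      (Set.toFinite _)
    have h1 : ({K} : Set _).ncard + ({K}ᶜ : Set _).ncard
        = Nat.card (G.induce Tᶜ).ConnectedComponent :=
      Set.ncard_add_ncard_compl _ (Set.toFinite _) (Set.toFinite _)
    rw [Set.ncard_singleton] at h1
    omega
  have hsplit : F.ncard + Fᶜ.ncard = Nat.card (G.induce Sᶜ).ConnectedComponent :=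
    Set.ncard_add_ncard_compl _ (Set.toFinite _) (Set.toFinite _)
  show Nat.card (G.induce Sᶜ).ConnectedComponent
    ≤ Nat.card (G.induce Tᶜ).ConnectedComponent + 2
  omega

/-- Deleting nothing from a connected graph leaves one component. -/
lemma numComp_empty [Fintype V] (G : SimpleGraph V) (hconn : G.Connected) :
    numComp G (∅ : Set V) = 1 := by
  unfold numComp
  rw [Set.compl_empty]
  have hc : (G.induce (Set.univ : Set V)).Connected :=
    (Iso.connected_iff (induceUnivIso G)).mpr hconn
  have : Subsingleton (G.induce (Set.univ : Set V)).ConnectedComponent :=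
    hc.preconnected.subsingleton_connectedComponent
  have hne : Nonempty (G.induce (Set.univ : Set V)).ConnectedComponent :=
    ⟨(G.induce _).connectedComponentMk ⟨hconn.nonempty.some, trivial⟩⟩
  exact Nat.card_eq_one_iff_unique.mpr ⟨this, hne⟩

/-- Let `G` be a connected `3`-regular graph that admits a cutset `S` with
`ω(G−S) > 2|S|` (i.e. `τ(G) < 1/2`). Then there exists a vertex `v` of `G` whose removal
leaves at least three connected components. -/
theorem stmt_13 {V : Type*} [Fintype V] (G : SimpleGraph V) [DecidableRel G.Adj]
    (hconn : G.Connected) (hreg : G.IsRegularOfDegree 3)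
    (S : Set V) (hcut : IsCutset G S) (h : 2 * S.ncard < numComp G S) :
    ∃ v : V, 3 ≤ numComp G {v} := by
  classical
  have main : ∀ n (S : Set V), S.ncard = n → 1 < numComp G S →
      2 * S.ncard < numComp G S → ∃ v : V, 3 ≤ numComp G {v} := by
    intro n
    induction n with
    | zero =>
      intro S hn hcut _
      rw [Set.ncard_eq_zero (Set.toFinite S)] at hn
      subst hn
      rw [numComp_empty G hconn] at hcut
      omega
    | succ n ih =>
      intro S hn hcut hlt
      obtain ⟨s, hs⟩ : S.Nonempty := Set.nonempty_of_ncard_ne_zero (by omega)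
      rcases Nat.eq_zero_or_pos n with hz | hpos
      · subst hz
        have hS : S = {s} := by
          obtain ⟨a, ha⟩ := (Set.ncard_eq_one).mp hn
          subst ha
          exact (by simpa using hs : s = a) ▸ rfl
        subst hS
        exact ⟨s, by rw [Set.ncard_singleton] at hlt; omega⟩
      · have hT : (S \ {s}).ncard = n := by
          rw [Set.ncard_diff_singleton_of_mem hs]
          omega
        have hk := key_numComp G hreg S s hs
        refine ih (S \ {s}) hT ?_ ?_
        · omega
        · omega
  exact main S.ncard S rfl hcut h

end Toughness
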